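/- (AMGF evolution bound, L=1 case) Consider v_{t+1} = β_t + w_t with v_0 = 0, where a.s. ‖β_t‖ ≤ ‖v_t‖, and w_t is sub-Gaussian with variance proxy σ_t² and independent of v_t, β_t. Then for all t ≥ 0 and all λ ∈ ℝ, E(Φ_{n,λ}(v_t)) ≤ exp( (λ²/2) ∑_{k=0}^{t-1} σ_k² ). -/

import Mathlib

open MeasureTheory ProbabilityTheory Real
open scoped RealInnerProductSpace

/-- The Averaged Moment Generating Function `Φ_{n,λ}(x) = E_{ℓ∼μS} exp(λ⟨ℓ,x⟩)`,
where `μS` is the (uniform) distribution of `ℓ` on the unit sphere. -/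
noncomputable def amgf {n : ℕ} (μS : Measure (EuclideanSpace ℝ (Fin n))) (lam : ℝ)
    (x : EuclideanSpace ℝ (Fin n)) : ℝ :=
  ∫ l, Real.exp (lam * ⟪l, x⟫) ∂μS

/-- `μS` is the uniform probability measure on the unit sphere of `ℝⁿ`:
it is a probability measure, concentrated on the unit sphere, and invariant
under every rotation (linear isometry) of `ℝⁿ`. -/
def IsUniformOnSphere {n : ℕ} (μS : Measure (EuclideanSpace ℝ (Fin n))) : Prop :=
  IsProbabilityMeasure μS ∧
    μS (Metric.sphere (0 : EuclideanSpace ℝ (Fin n)) 1)ᶜ = 0 ∧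
    ∀ Q : EuclideanSpace ℝ (Fin n) ≃ₗᵢ[ℝ] EuclideanSpace ℝ (Fin n),
      Measure.map Q μS = μS

/-- A random vector `w : Ω → ℝⁿ` is sub-Gaussian with variance proxy `σ2`. -/
def IsSubGaussian {Ω : Type*} [MeasurableSpace Ω] (μ : Measure Ω) {n : ℕ}
    (X : Ω → EuclideanSpace ℝ (Fin n)) (σ2 : ℝ) : Prop :=
  Integrable X μ ∧ (∫ ω, X ω ∂μ) = 0 ∧
    ∀ (lam : ℝ) (l : EuclideanSpace ℝ (Fin n)), ‖l‖ = 1 →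
      Integrable (fun ω => Real.exp (lam * ⟪l, X ω⟫)) μ ∧
      (∫ ω, Real.exp (lam * ⟪l, X ω⟫) ∂μ) ≤ Real.exp (lam ^ 2 * σ2 / 2)

section Aux
variable {n : ℕ} {μS : Measure (EuclideanSpace ℝ (Fin n))}

lemma my_ae_norm (hμS : IsUniformOnSphere μS) : ∀ᵐ l ∂μS, ‖l‖ = 1 := by
  rw [ae_iff]
  refine measure_mono_null ?_ hμS.2.1
  intro l hl
  simpa [Metric.mem_sphere, dist_zero_right] using hl

lemma my_cont (lam : ℝ) (x : EuclideanSpace ℝ (Fin n)) :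
    Continuous fun l : EuclideanSpace ℝ (Fin n) => Real.exp (lam * ⟪l, x⟫) :=
  Real.continuous_exp.comp (continuous_const.mul (continuous_id.inner continuous_const))

lemma my_integrable (hμS : IsUniformOnSphere μS) (lam : ℝ) (x : EuclideanSpace ℝ (Fin n)) :
    Integrable (fun l => Real.exp (lam * ⟪l, x⟫)) μS := by
  haveI := hμS.1
  refine Integrable.mono' (integrable_const (Real.exp (|lam| * ‖x‖)))
    (my_cont lam x).aestronglyMeasurable ?_
  filter_upwards [my_ae_norm hμS] with l hl
  rw [Real.norm_eq_abs, Real.abs_exp, Real.exp_le_exp]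
  calc lam * ⟪l, x⟫ ≤ |lam * ⟪l, x⟫| := le_abs_self _
    _ = |lam| * |⟪l, x⟫| := abs_mul _ _
    _ ≤ |lam| * (‖l‖ * ‖x‖) := by
        gcongr
        exact abs_real_inner_le_norm l x
    _ = |lam| * ‖x‖ := by rw [hl, one_mul]

lemma my_amgf_map (hμS : IsUniformOnSphere μS)
    (Q : EuclideanSpace ℝ (Fin n) ≃ₗᵢ[ℝ] EuclideanSpace ℝ (Fin n))
    (lam : ℝ) (x : EuclideanSpace ℝ (Fin n)) :
    amgf μS lam (Q x) = amgf μS lam x := by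
  unfold amgf
  have h1 : ∀ l, Real.exp (lam * ⟪l, Q x⟫) = Real.exp (lam * ⟪Q.symm l, x⟫) := by
    intro l
    rw [← Q.inner_map_map (Q.symm l) x, Q.apply_symm_apply]
  simp_rw [h1]
  calc ∫ l, Real.exp (lam * ⟪Q.symm l, x⟫) ∂μS
      = ∫ l, Real.exp (lam * ⟪l, x⟫) ∂(Measure.map Q.symm μS) := by
        rw [integral_map (Q.symm.continuous.measurable.aemeasurable)
          (my_cont lam x).aestronglyMeasurable]
    _ = _ := by rw [hμS.2.2 Q.symm]

lemma my_amgf_cosh (hμS : IsUniformOnSphere μS) (lam : ℝ) (y : EuclideanSpace ℝ (Fin n)) :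
    amgf μS lam y = ∫ l, Real.cosh (lam * ⟪l, y⟫) ∂μS := by
  have h1 : amgf μS lam (-y) = amgf μS lam y := by
    simpa using my_amgf_map hμS (LinearIsometryEquiv.neg ℝ) lam y
  have h2 : amgf μS lam (-y) = ∫ l, Real.exp (-(lam * ⟪l, y⟫)) ∂μS := by
    unfold amgf
    simp_rw [inner_neg_right, mul_neg]
  have hi1 : Integrable (fun l => Real.exp (lam * ⟪l, y⟫)) μS := my_integrable hμS lam y
  have hi2 : Integrable (fun l => Real.exp (-(lam * ⟪l, y⟫))) μS := by
    simpa [neg_mul] using my_integrable hμS (-lam) y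
  simp_rw [Real.cosh_eq]
  rw [integral_div, integral_add hi1 hi2, ← h2, h1]
  unfold amgf
  ring

lemma my_integrable_cosh (hμS : IsUniformOnSphere μS) (lam : ℝ) (y : EuclideanSpace ℝ (Fin n)) :
    Integrable (fun l => Real.cosh (lam * ⟪l, y⟫)) μS := by
  have hi1 : Integrable (fun l => Real.exp (lam * ⟪l, y⟫)) μS := my_integrable hμS lam y
  have hi2 : Integrable (fun l => Real.exp (-(lam * ⟪l, y⟫))) μS := by
    simpa [neg_mul] using my_integrable hμS (-lam) y
  simp_rw [Real.cosh_eq]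
  exact (hi1.add hi2).div_const 2

lemma my_amgf_mono (hμS : IsUniformOnSphere μS) (hn : n ≠ 0) (lam : ℝ)
    {x y : EuclideanSpace ℝ (Fin n)} (h : ‖y‖ ≤ ‖x‖) :
    amgf μS lam y ≤ amgf μS lam x := by
  set e : EuclideanSpace ℝ (Fin n) :=
    EuclideanSpace.single (⟨0, Nat.pos_of_ne_zero hn⟩ : Fin n) (1 : ℝ) with he_def
  have he : ‖e‖ = 1 := by simp [he_def, EuclideanSpace.norm_single]
  have hns : ∀ z : EuclideanSpace ℝ (Fin n), ‖(‖z‖ • e)‖ = ‖z‖ := by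
    intro z
    rw [norm_smul, he, mul_one, Real.norm_eq_abs, abs_of_nonneg (norm_nonneg z)]
  have key : ∀ z : EuclideanSpace ℝ (Fin n), amgf μS lam z = amgf μS lam (‖z‖ • e) := by
    intro z
    rcases eq_or_ne z 0 with rfl | hz
    · rw [norm_zero, zero_smul]
    · have hrefl := Submodule.reflection_sub (hns z)
      calc amgf μS lam z = amgf μS lam ((Submodule.reflection (ℝ ∙ (‖z‖ • e - z))ᗮ) (‖z‖ • e)) := by
            rw [hrefl]
        _ = amgf μS lam (‖z‖ • e) := my_amgf_map hμS _ lam _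
  rw [key x, key y, my_amgf_cosh hμS, my_amgf_cosh hμS]
  refine integral_mono (my_integrable_cosh hμS lam _) (my_integrable_cosh hμS lam _) ?_
  intro l
  rw [Real.cosh_le_cosh]
  simp only [real_inner_smul_right]
  rw [abs_mul, abs_mul, abs_mul, abs_mul, abs_norm, abs_norm]
  gcongr

end Aux

/-- AMGF evolution bound, L = 1 case: for `v_{t+1} = β_t + w_t`
with `v_0 = 0`, `‖β_t‖ ≤ ‖v_t‖`, and `w_t` sub-Gaussian with variance proxy
`σ_t²` and independent of `(v_t, β_t)`, it holds that
`E Φ_{n,λ}(v_t) ≤ exp((λ²/2) ∑_{k<t} σ_k²)` for all `t` and `λ`. -/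
theorem amgf_evolution_bound
    {Ω : Type*} [MeasurableSpace Ω] (μ : Measure Ω) [IsProbabilityMeasure μ]
    {n : ℕ} (μS : Measure (EuclideanSpace ℝ (Fin n))) (hμS : IsUniformOnSphere μS)
    (v β w : ℕ → Ω → EuclideanSpace ℝ (Fin n)) (σ2 : ℕ → ℝ)
    (hv0 : ∀ ω, v 0 ω = 0)
    (hdyn : ∀ t ω, v (t + 1) ω = β t ω + w t ω)
    (hβ : ∀ t ω, ‖β t ω‖ ≤ ‖v t ω‖)
    (hvm : ∀ t, Measurable (v t)) (hβm : ∀ t, Measurable (β t))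
    (hwm : ∀ t, Measurable (w t))
    (hw : ∀ t, IsSubGaussian μ (w t) (σ2 t))
    (hindep : ∀ t, IndepFun (w t) (fun ω => (v t ω, β t ω)) μ) :
    ∀ (t : ℕ) (lam : ℝ),
      (∫ ω, amgf μS lam (v t ω) ∂μ) ≤
        Real.exp (lam ^ 2 / 2 * ∑ k ∈ Finset.range t, σ2 k) := by
  haveI hPS := hμS.1
  -- n ≠ 0
  have hn : n ≠ 0 := by
    rintro rfl
    have h1 : (Metric.sphere (0 : EuclideanSpace ℝ (Fin 0)) 1) = ∅ := by
      ext x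
      simp [Subsingleton.elim x (0 : EuclideanSpace ℝ (Fin 0))]
    have h2 := hμS.2.1
    rw [h1, Set.compl_empty] at h2
    exact one_ne_zero ((measure_univ (μ := μS)).symm.trans h2)
  intro t lam
  -- joint measurability helper
  have hjm : ∀ (f : Ω → EuclideanSpace ℝ (Fin n)), Measurable f →
      Measurable (fun p : EuclideanSpace ℝ (Fin n) × Ω =>
        ENNReal.ofReal (Real.exp (lam * ⟪p.1, f p.2⟫))) := by
    intro f hf
    apply Measurable.ennreal_ofReal
    have h1 : Measurable fun p : EuclideanSpace ℝ (Fin n) × Ω => ⟪p.1, f p.2⟫ := by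
      have : Continuous fun q : EuclideanSpace ℝ (Fin n) × EuclideanSpace ℝ (Fin n) =>
          ⟪q.1, q.2⟫ := continuous_inner
      exact this.measurable.comp (measurable_fst.prodMk (hf.comp measurable_snd))
    exact Real.measurable_exp.comp (h1.const_mul lam)
  -- amgf as lintegral
  have hamgf_lint : ∀ x, ENNReal.ofReal (amgf μS lam x) =
      ∫⁻ l, ENNReal.ofReal (Real.exp (lam * ⟪l, x⟫)) ∂μS := fun x =>
    ofReal_integral_eq_lintegral_ofReal (my_integrable hμS lam x)
      (ae_of_all _ fun l => (Real.exp_pos _).le)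
  -- main lintegral bound
  have main : ∀ t, (∫⁻ ω, ENNReal.ofReal (amgf μS lam (v t ω)) ∂μ) ≤
      ENNReal.ofReal (Real.exp (lam ^ 2 / 2 * ∑ k ∈ Finset.range t, σ2 k)) := by
    intro t
    induction t with
    | zero =>
      have h0 : ∀ ω, amgf μS lam (v 0 ω) = 1 := by
        intro ω
        rw [hv0]
        unfold amgf
        simp
      simp [h0]
    | succ t ih =>
      set c := ENNReal.ofReal (Real.exp (lam ^ 2 * σ2 t / 2)) with hc
      have swap1 : ∀ (f : Ω → EuclideanSpace ℝ (Fin n)), Measurable f →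
          (∫⁻ ω, ∫⁻ l, ENNReal.ofReal (Real.exp (lam * ⟪l, f ω⟫)) ∂μS ∂μ) =
          ∫⁻ l, ∫⁻ ω, ENNReal.ofReal (Real.exp (lam * ⟪l, f ω⟫)) ∂μ ∂μS := by
        intro f hf
        exact lintegral_lintegral_swap ((hjm f hf).comp measurable_swap).aemeasurable
      calc (∫⁻ ω, ENNReal.ofReal (amgf μS lam (v (t+1) ω)) ∂μ)
          = ∫⁻ l, ∫⁻ ω, ENNReal.ofReal (Real.exp (lam * ⟪l, v (t+1) ω⟫)) ∂μ ∂μS := by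
            simp_rw [hamgf_lint]
            exact swap1 (v (t+1)) (hvm (t+1))
        _ ≤ ∫⁻ l, (∫⁻ ω, ENNReal.ofReal (Real.exp (lam * ⟪l, β t ω⟫)) ∂μ) * c ∂μS := by
            refine lintegral_mono_ae ?_
            filter_upwards [my_ae_norm hμS] with l hl
            have hsplit : ∀ ω, ENNReal.ofReal (Real.exp (lam * ⟪l, v (t+1) ω⟫)) =
                ENNReal.ofReal (Real.exp (lam * ⟪l, β t ω⟫)) *
                ENNReal.ofReal (Real.exp (lam * ⟪l, w t ω⟫)) := by
              intro ω
              rw [← ENNReal.ofReal_mul (Real.exp_pos _).le, ← Real.exp_add, hdyn t ω,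
                inner_add_right, mul_add]
            have hφ : Measurable fun u : EuclideanSpace ℝ (Fin n) =>
                ENNReal.ofReal (Real.exp (lam * ⟪l, u⟫)) := by
              apply Measurable.ennreal_ofReal
              exact (Real.continuous_exp.comp
                (continuous_const.mul (continuous_const.inner continuous_id))).measurable
            have hBm : Measurable fun ω => ENNReal.ofReal (Real.exp (lam * ⟪l, β t ω⟫)) :=
              hφ.comp (hβm t)
            have hWm : Measurable fun ω => ENNReal.ofReal (Real.exp (lam * ⟪l, w t ω⟫)) :=
              hφ.comp (hwm t)
            have hindep' : IndepFun
                (fun ω => ENNReal.ofReal (Real.exp (lam * ⟪l, β t ω⟫)))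
                (fun ω => ENNReal.ofReal (Real.exp (lam * ⟪l, w t ω⟫))) μ := by
              have hψ : Measurable fun p : EuclideanSpace ℝ (Fin n) × EuclideanSpace ℝ (Fin n)
                  => ENNReal.ofReal (Real.exp (lam * ⟪l, p.2⟫)) := hφ.comp measurable_snd
              exact ((hindep t).comp hφ hψ).symm
            have hWbound : (∫⁻ ω, ENNReal.ofReal (Real.exp (lam * ⟪l, w t ω⟫)) ∂μ) ≤ c := by
              obtain ⟨hint, hbd⟩ := (hw t).2.2 lam l hl
              rw [← ofReal_integral_eq_lintegral_ofReal hint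
                (ae_of_all _ fun ω => (Real.exp_pos _).le)]
              exact ENNReal.ofReal_le_ofReal hbd
            calc (∫⁻ ω, ENNReal.ofReal (Real.exp (lam * ⟪l, v (t+1) ω⟫)) ∂μ)
                = ∫⁻ ω, ENNReal.ofReal (Real.exp (lam * ⟪l, β t ω⟫)) *
                    ENNReal.ofReal (Real.exp (lam * ⟪l, w t ω⟫)) ∂μ := by
                  simp_rw [hsplit]
              _ = (∫⁻ ω, ENNReal.ofReal (Real.exp (lam * ⟪l, β t ω⟫)) ∂μ) *
                    ∫⁻ ω, ENNReal.ofReal (Real.exp (lam * ⟪l, w t ω⟫)) ∂μ :=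
                  lintegral_mul_eq_lintegral_mul_lintegral_of_indepFun'' hBm.aemeasurable
                    hWm.aemeasurable hindep'
              _ ≤ _ := mul_le_mul_right hWbound _
        _ = (∫⁻ l, ∫⁻ ω, ENNReal.ofReal (Real.exp (lam * ⟪l, β t ω⟫)) ∂μ ∂μS) * c :=
            lintegral_mul_const c ((hjm (β t) (hβm t)).lintegral_prod_right')
        _ = (∫⁻ ω, ENNReal.ofReal (amgf μS lam (β t ω)) ∂μ) * c := by
            rw [← swap1 (β t) (hβm t)]
            simp_rw [hamgf_lint]
        _ ≤ ENNReal.ofReal (Real.exp (lam ^ 2 / 2 * ∑ k ∈ Finset.range t, σ2 k)) * c := by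
            refine mul_le_mul_left (le_trans (lintegral_mono fun ω => ?_) ih) c
            exact ENNReal.ofReal_le_ofReal (my_amgf_mono hμS hn lam (hβ t ω))
        _ = ENNReal.ofReal (Real.exp (lam ^ 2 / 2 * ∑ k ∈ Finset.range (t+1), σ2 k)) := by
            rw [hc, ← ENNReal.ofReal_mul (Real.exp_pos _).le, ← Real.exp_add,
              Finset.sum_range_succ]
            ring_nf
  -- conclude
  have hnn : 0 ≤ᵐ[μ] fun ω => amgf μS lam (v t ω) := by
    refine ae_of_all _ fun ω => ?_
    exact integral_nonneg fun l => (Real.exp_pos _).le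
  have hmeas : AEStronglyMeasurable (fun ω => amgf μS lam (v t ω)) μ := by
    have heq : (fun ω => amgf μS lam (v t ω)) = fun ω =>
        (∫⁻ l, ENNReal.ofReal (Real.exp (lam * ⟪l, v t ω⟫)) ∂μS).toReal := by
      funext ω
      rw [← hamgf_lint]
      exact (ENNReal.toReal_ofReal (integral_nonneg fun l => (Real.exp_pos _).le)).symm
    rw [heq]
    exact ((hjm (v t) (hvm t)).lintegral_prod_left'.ennreal_toReal).aestronglyMeasurable
  rw [integral_eq_lintegral_of_nonneg_ae hnn hmeas]
  exact ENNReal.toReal_le_of_le_ofReal (Real.exp_pos _).le (main t)
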